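/- Let g = 3, let e_1, …, e_8 ∈ ℂ, let f(x) = ∏_{m=1}^{8}(x − e_m) = ∑_{k=0}^{8} λ_k x^k with Kleinian 2-polar F(x,z), and for each 4-element subset S of {1,…,8} let Λ^{[S]} be the unique symmetric 3×3 matrix with P_S(x)P_{S^c}(z) + P_S(z)P_{S^c}(x) − F(x,z) = (x−z)² ∑_{i,j=1}^{3} Λ^{[S]}_{ij} x^{i−1} z^{j−1}. Then (1/2) ∑_S Λ^{[S]} = [[15λ_2, 5λ_3, λ_4], [5λ_3, 18λ_4, 5λ_5], [λ_4, 5λ_5, 15λ_6]], where the sum runs over all 140 subsets S of size 4 (equivalently, the sum over the 70 unordered partitions {S, S^c} equals this matrix). -/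

import Mathlib

open Finset

set_option maxHeartbeats 2000000 in
/-- genus 3, equation (4.4) of the paper, rational part: summing the
partition matrices `Λ^{[S]}` over all 140 subsets `S` of size 4 (twice the 70 unordered
partitions) and halving gives
`Λ_3 = [[15λ_2, 5λ_3, λ_4], [5λ_3, 18λ_4, 5λ_5], [λ_4, 5λ_5, 15λ_6]]`. -/
theorem genus_three_residual_matrix_sum
    (e : Fin 8 → ℂ)
    (lam : ℕ → ℂ)
    (hlam : ∀ x : ℂ, ∏ m, (x - e m) = ∑ k ∈ Finset.range 9, lam k * x ^ k)
    (F : ℂ → ℂ → ℂ)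
    (hF : ∀ x z : ℂ, F x z = 2 * lam 8 * x ^ 4 * z ^ 4
        + ∑ k ∈ Finset.range 4,
            x ^ k * z ^ k * (2 * lam (2 * k) + (x + z) * lam (2 * k + 1)))
    (L : Finset (Fin 8) → Matrix (Fin 3) (Fin 3) ℂ)
    (hLsymm : ∀ S ∈ Finset.powersetCard 4 (Finset.univ : Finset (Fin 8)), (L S).IsSymm)
    (hL : ∀ S ∈ Finset.powersetCard 4 (Finset.univ : Finset (Fin 8)), ∀ x z : ℂ,
        (∏ i ∈ S, (x - e i)) * (∏ j ∈ Sᶜ, (z - e j))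
          + (∏ i ∈ S, (z - e i)) * (∏ j ∈ Sᶜ, (x - e j)) - F x z
        = (x - z) ^ 2 * ∑ a, ∑ b, L S a b * x ^ (a : ℕ) * z ^ (b : ℕ)) :
    (1 / 2 : ℂ) • ∑ S ∈ Finset.powersetCard 4 (Finset.univ : Finset (Fin 8)), L S
      = !![15 * lam 2, 5 * lam 3, lam 4;
           5 * lam 3, 18 * lam 4, 5 * lam 5;
           lam 4, 5 * lam 5, 15 * lam 6] := by
  classical
  have key : ∀ x z : ℂ, ∑ S ∈ Finset.powersetCard 4 (Finset.univ : Finset (Fin 8)),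
      (∏ i ∈ S, (x - e i)) * ∏ j ∈ Sᶜ, (z - e j) = 70*lam 0 + 35*lam 1*x + 35*lam 1*z + 15*lam 2*x^2 + 40*lam 2*x*z + 15*lam 2*z^2 + 5*lam 3*x^3 + 30*lam 3*x^2*z + 30*lam 3*x*z^2 + 5*lam 3*z^3 + lam 4*x^4 + 16*lam 4*x^3*z + 36*lam 4*x^2*z^2 + 16*lam 4*x*z^3 + lam 4*z^4 + 5*lam 5*x^4*z + 30*lam 5*x^3*z^2 + 30*lam 5*x^2*z^3 + 5*lam 5*x*z^4 + 15*lam 6*x^4*z^2 + 40*lam 6*x^3*z^3 + 15*lam 6*x^2*z^4 + 35*lam 7*x^4*z^3 + 35*lam 7*x^3*z^4 + 70*lam 8*x^4*z^4 := by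
    intro x z
    have base : ∀ t : ℂ, ∏ m, (t * (x - e m) + (z - e m))
        = ∑ k ∈ Finset.range 9, t ^ k *
            ∑ S ∈ Finset.powersetCard k (Finset.univ : Finset (Fin 8)),
              (∏ i ∈ S, (x - e i)) * ∏ j ∈ Sᶜ, (z - e j) := by
      intro t
      rw [Finset.prod_add, Finset.powerset_card_disjiUnion]
      erw [Finset.sum_disjiUnion]
      rw [Finset.card_fin]
      refine Finset.sum_congr rfl fun k hk => ?_
      rw [Finset.mul_sum]
      refine Finset.sum_congr rfl fun S hS => ?_
      obtain ⟨-, hcard⟩ := Finset.mem_powersetCard.mp hS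
      rw [Finset.prod_mul_distrib, Finset.prod_const, hcard, ← Finset.compl_eq_univ_sdiff]
      ring
    have hval : ∀ t : ℂ, (1 + t) ≠ 0 → ∏ m, (t * (x - e m) + (z - e m))
        = ∑ k ∈ Finset.range 9, lam k * (t * x + z) ^ k * (1 + t) ^ (8 - k) := by
      intro t ht
      calc ∏ m, (t * (x - e m) + (z - e m))
          = ∏ m : Fin 8, ((1 + t) * ((t * x + z) / (1 + t) - e m)) :=
            Finset.prod_congr rfl fun m _ => by field_simp; ring
        _ = (1 + t) ^ 8 * ∏ m, ((t * x + z) / (1 + t) - e m) := by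
            rw [Finset.prod_mul_distrib, Finset.prod_const, Finset.card_fin]
        _ = (1 + t) ^ 8 * ∑ k ∈ Finset.range 9, lam k * ((t * x + z) / (1 + t)) ^ k := by
            rw [hlam]
        _ = ∑ k ∈ Finset.range 9, lam k * (t * x + z) ^ k * (1 + t) ^ (8 - k) := by
            rw [Finset.mul_sum]
            refine Finset.sum_congr rfl fun k hk => ?_
            have hk8 : k ≤ 8 := by have := Finset.mem_range.mp hk; omega
            rw [div_pow, show (1 + t) ^ 8 = (1 + t) ^ (8 - k) * (1 + t) ^ k from by
              rw [← pow_add]; congr 1; omega]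
            field_simp
    have q0 := (base (0:ℂ)).symm.trans (hval (0:ℂ) (by norm_num))
    have q1 := (base (1:ℂ)).symm.trans (hval (1:ℂ) (by norm_num))
    have q2 := (base (2:ℂ)).symm.trans (hval (2:ℂ) (by norm_num))
    have q3 := (base (3:ℂ)).symm.trans (hval (3:ℂ) (by norm_num))
    have q4 := (base (4:ℂ)).symm.trans (hval (4:ℂ) (by norm_num))
    have q5 := (base (5:ℂ)).symm.trans (hval (5:ℂ) (by norm_num))
    have q6 := (base (6:ℂ)).symm.trans (hval (6:ℂ) (by norm_num))
    have q7 := (base (7:ℂ)).symm.trans (hval (7:ℂ) (by norm_num))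
    have q8 := (base (8:ℂ)).symm.trans (hval (8:ℂ) (by norm_num))
    simp only [Finset.sum_range_succ, Finset.sum_range_zero] at q0 q1 q2 q3 q4 q5 q6 q7 q8
    norm_num at q0 q1 q2 q3 q4 q5 q6 q7 q8
    linear_combination (1069/1920 : ℂ) * q0 + (-329/90 : ℂ) * q1 + (15289/1440 : ℂ) * q2 + (-268/15 : ℂ) * q3 + (10993/576 : ℂ) * q4 + (-1193/90 : ℂ) * q5 + (2803/480 : ℂ) * q6 + (-67/45 : ℂ) * q7 + (967/5760 : ℂ) * q8
  have master : ∀ x z : ℂ,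
      (∑ S ∈ Finset.powersetCard 4 (Finset.univ : Finset (Fin 8)),
        (∏ i ∈ S, (x - e i)) * ∏ j ∈ Sᶜ, (z - e j))
      + (∑ S ∈ Finset.powersetCard 4 (Finset.univ : Finset (Fin 8)),
          (∏ i ∈ S, (z - e i)) * ∏ j ∈ Sᶜ, (x - e j))
      - 70 * F x z
      = (x - z) ^ 2 * ∑ a : Fin 3, ∑ b : Fin 3,
          (∑ S ∈ Finset.powersetCard 4 (Finset.univ : Finset (Fin 8)), L S) a b
            * x ^ (a : ℕ) * z ^ (b : ℕ) := by
    intro x z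
    have h1 : ∑ S ∈ Finset.powersetCard 4 (Finset.univ : Finset (Fin 8)),
        ((∏ i ∈ S, (x - e i)) * (∏ j ∈ Sᶜ, (z - e j))
          + (∏ i ∈ S, (z - e i)) * (∏ j ∈ Sᶜ, (x - e j)) - F x z)
        = ∑ S ∈ Finset.powersetCard 4 (Finset.univ : Finset (Fin 8)),
            (x - z) ^ 2 * ∑ a : Fin 3, ∑ b : Fin 3, L S a b * x ^ (a : ℕ) * z ^ (b : ℕ) :=
      Finset.sum_congr rfl fun S hS => hL S hS x z
    rw [Finset.sum_sub_distrib, Finset.sum_add_distrib, Finset.sum_const,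
      Finset.card_powersetCard, Finset.card_fin] at h1
    rw [show Nat.choose 8 4 = 70 from rfl, nsmul_eq_mul] at h1
    push_cast at h1
    rw [h1, ← Finset.mul_sum]
    congr 1
    rw [Finset.sum_comm]
    refine Finset.sum_congr rfl fun a _ => ?_
    rw [Finset.sum_comm]
    refine Finset.sum_congr rfl fun b _ => ?_
    rw [Matrix.sum_apply, Finset.sum_mul, Finset.sum_mul]
  have m0 := master (0:ℂ) (4:ℂ)
  rw [key (0:ℂ) (4:ℂ), key (4:ℂ) (0:ℂ), hF] at m0
  have m1 := master (0:ℂ) (5:ℂ)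
  rw [key (0:ℂ) (5:ℂ), key (5:ℂ) (0:ℂ), hF] at m1
  have m2 := master (0:ℂ) (6:ℂ)
  rw [key (0:ℂ) (6:ℂ), key (6:ℂ) (0:ℂ), hF] at m2
  have m3 := master (1:ℂ) (4:ℂ)
  rw [key (1:ℂ) (4:ℂ), key (4:ℂ) (1:ℂ), hF] at m3
  have m4 := master (1:ℂ) (5:ℂ)
  rw [key (1:ℂ) (5:ℂ), key (5:ℂ) (1:ℂ), hF] at m4
  have m5 := master (1:ℂ) (6:ℂ)
  rw [key (1:ℂ) (6:ℂ), key (6:ℂ) (1:ℂ), hF] at m5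
  have m6 := master (2:ℂ) (4:ℂ)
  rw [key (2:ℂ) (4:ℂ), key (4:ℂ) (2:ℂ), hF] at m6
  have m7 := master (2:ℂ) (5:ℂ)
  rw [key (2:ℂ) (5:ℂ), key (5:ℂ) (2:ℂ), hF] at m7
  have m8 := master (2:ℂ) (6:ℂ)
  rw [key (2:ℂ) (6:ℂ), key (6:ℂ) (2:ℂ), hF] at m8
  simp only [Fin.sum_univ_three, Finset.sum_range_succ, Finset.sum_range_zero,
    Fin.val_zero, Fin.val_one, Fin.val_two] at m0 m1 m2 m3 m4 m5 m6 m7 m8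
  norm_num at m0 m1 m2 m3 m4 m5 m6 m7 m8
  ext i j
  fin_cases i <;> fin_cases j <;>
    simp only [Matrix.smul_apply, Matrix.cons_val', Matrix.cons_val_zero, Matrix.cons_val_one,
      Matrix.head_cons, Matrix.head_fin_const, Matrix.empty_val', Matrix.cons_val_fin_one,
      Matrix.of_apply, Fin.mk_zero, Fin.mk_one, Fin.reduceFinMk, Matrix.cons_val_two,
      Matrix.tail_cons, Matrix.head_cons, smul_eq_mul]
  · linear_combination (-15/32 : ℂ) * m0 + (12/25 : ℂ) * m1 + (-5/36 : ℂ) * m2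
  · linear_combination (11/64 : ℂ) * m0 + (-1/5 : ℂ) * m1 + (1/16 : ℂ) * m2
  · linear_combination (-1/64 : ℂ) * m0 + (1/50 : ℂ) * m1 + (-1/144 : ℂ) * m2
  · linear_combination (45/64 : ℂ) * m0 + (-18/25 : ℂ) * m1 + (5/24 : ℂ) * m2 + (-5/3 : ℂ) * m3 + (3/2 : ℂ) * m4 + (-2/5 : ℂ) * m5 + (15/16 : ℂ) * m6 + (-2/3 : ℂ) * m7 + (5/32 : ℂ) * m8
  · linear_combination (-33/128 : ℂ) * m0 + (3/10 : ℂ) * m1 + (-3/32 : ℂ) * m2 + (11/18 : ℂ) * m3 + (-5/8 : ℂ) * m4 + (9/50 : ℂ) * m5 + (-11/32 : ℂ) * m6 + (5/18 : ℂ) * m7 + (-9/128 : ℂ) * m8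
  · linear_combination (3/128 : ℂ) * m0 + (-3/100 : ℂ) * m1 + (1/96 : ℂ) * m2 + (-1/18 : ℂ) * m3 + (1/16 : ℂ) * m4 + (-1/50 : ℂ) * m5 + (1/32 : ℂ) * m6 + (-1/36 : ℂ) * m7 + (1/128 : ℂ) * m8
  · linear_combination (-15/64 : ℂ) * m0 + (6/25 : ℂ) * m1 + (-5/72 : ℂ) * m2 + (5/6 : ℂ) * m3 + (-3/4 : ℂ) * m4 + (1/5 : ℂ) * m5 + (-15/16 : ℂ) * m6 + (2/3 : ℂ) * m7 + (-5/32 : ℂ) * m8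
  · linear_combination (11/128 : ℂ) * m0 + (-1/10 : ℂ) * m1 + (1/32 : ℂ) * m2 + (-11/36 : ℂ) * m3 + (5/16 : ℂ) * m4 + (-9/100 : ℂ) * m5 + (11/32 : ℂ) * m6 + (-5/18 : ℂ) * m7 + (9/128 : ℂ) * m8
  · linear_combination (-1/128 : ℂ) * m0 + (1/100 : ℂ) * m1 + (-1/288 : ℂ) * m2 + (1/36 : ℂ) * m3 + (-1/32 : ℂ) * m4 + (1/100 : ℂ) * m5 + (-1/32 : ℂ) * m6 + (1/36 : ℂ) * m7 + (-1/128 : ℂ) * m8
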